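/- Let P ≥ 1, n ≥ 1, B > 0, η_c > 0, and let L : ℝ × ℝ → ℝ be a nonnegative loss function that is convex in its first argument for each fixed value of the second argument and convex in its second argument for each fixed value of the first argument. Let θ_1,...,θ_P ∈ ℝ^n, let u, u' ∈ ℝ^n with ‖u‖ = ‖u'‖ = 1, and suppose that for all i, j ∈ {1,...,P}: L(⟨θ_i, u'⟩, ⟨θ_j, u'⟩) ≤ B · L(⟨θ_i, u⟩, ⟨θ_j, u⟩). Let p, q ∈ ℝ^P be probability vectors. If Σ_{i=1}^P p_i · L(⟨θ_i, u⟩, ⟨θ_j, u⟩) ≤ η_c for every j ∈ {1,...,P}, then L( Σ_{i=1}^P p_i ⟨θ_i, u'⟩ , Σ_{j=1}^P q_j ⟨θ_j, u'⟩ ) ≤ η_c · B. -/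

import Mathlib

/-- Lemma 5 of the paper (abstract form): transferring the confidence condition
from the feature vector `u` to the feature vector `u'` using assumption (a4)
with constant `B`. -/
theorem confidence_condition_transfer
    (P n : ℕ) (hP : 1 ≤ P) (hn : 1 ≤ n)
    (B ηc : ℝ) (hB : 0 < B) (hηc : 0 < ηc)
    (L : ℝ → ℝ → ℝ)
    (hLnonneg : ∀ a b : ℝ, 0 ≤ L a b)
    (hconv1 : ∀ b : ℝ, ConvexOn ℝ Set.univ (fun a => L a b))
    (hconv2 : ∀ a : ℝ, ConvexOn ℝ Set.univ (fun b => L a b))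
    (θ : ℕ → EuclideanSpace ℝ (Fin n))
    (u u' : EuclideanSpace ℝ (Fin n)) (hu : ‖u‖ = 1) (hu' : ‖u'‖ = 1)
    (htransfer : ∀ i ∈ Finset.range P, ∀ j ∈ Finset.range P,
      L (inner ℝ (θ i) u' : ℝ) (inner ℝ (θ j) u' : ℝ)
        ≤ B * L (inner ℝ (θ i) u : ℝ) (inner ℝ (θ j) u : ℝ))
    (p q : ℕ → ℝ)
    (hp0 : ∀ i ∈ Finset.range P, 0 ≤ p i)
    (hp1 : ∑ i ∈ Finset.range P, p i = 1)
    (hq0 : ∀ j ∈ Finset.range P, 0 ≤ q j)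
    (hq1 : ∑ j ∈ Finset.range P, q j = 1)
    (hcond : ∀ j ∈ Finset.range P,
      ∑ i ∈ Finset.range P, p i * L (inner ℝ (θ i) u : ℝ) (inner ℝ (θ j) u : ℝ) ≤ ηc) :
    L (∑ i ∈ Finset.range P, p i * (inner ℝ (θ i) u' : ℝ))
      (∑ j ∈ Finset.range P, q j * (inner ℝ (θ j) u' : ℝ)) ≤ ηc * B := by
  set a : ℕ → ℝ := fun i => (inner ℝ (θ i) u' : ℝ)
  set A : ℝ := ∑ i ∈ Finset.range P, p i * a i with hA
  -- step 1: convexity in second arg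
  have h1 : L A (∑ j ∈ Finset.range P, q j * a j)
      ≤ ∑ j ∈ Finset.range P, q j * L A (a j) := by
    simpa [smul_eq_mul] using
      (hconv2 A).map_sum_le hq0 hq1 (fun j _ => Set.mem_univ _)
  -- step 2: for each j, convexity in first arg
  have h2 : ∀ j ∈ Finset.range P, L A (a j) ≤ ∑ i ∈ Finset.range P, p i * L (a i) (a j) := by
    intro j _
    simpa [smul_eq_mul] using
      (hconv1 (a j)).map_sum_le hp0 hp1 (fun i _ => Set.mem_univ _)
  have h3 : ∀ j ∈ Finset.range P,
      ∑ i ∈ Finset.range P, p i * L (a i) (a j) ≤ B * ηc := by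
    intro j hj
    calc ∑ i ∈ Finset.range P, p i * L (a i) (a j)
        ≤ ∑ i ∈ Finset.range P, p i * (B * L (inner ℝ (θ i) u : ℝ) (inner ℝ (θ j) u : ℝ)) := by
          refine Finset.sum_le_sum fun i hi => ?_
          exact mul_le_mul_of_nonneg_left (htransfer i hi j hj) (hp0 i hi)
      _ = B * ∑ i ∈ Finset.range P, p i * L (inner ℝ (θ i) u : ℝ) (inner ℝ (θ j) u : ℝ) := by
          rw [Finset.mul_sum]; apply Finset.sum_congr rfl; intros; ring
      _ ≤ B * ηc := mul_le_mul_of_nonneg_left (hcond j hj) hB.le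
  have h4 : L A (∑ j ∈ Finset.range P, q j * a j) ≤ B * ηc := by
    calc L A (∑ j ∈ Finset.range P, q j * a j)
        ≤ ∑ j ∈ Finset.range P, q j * L A (a j) := h1
      _ ≤ ∑ j ∈ Finset.range P, q j * (B * ηc) := by
          refine Finset.sum_le_sum fun j hj => ?_
          exact mul_le_mul_of_nonneg_left ((h2 j hj).trans (h3 j hj)) (hq0 j hj)
      _ = B * ηc := by rw [← Finset.sum_mul, hq1, one_mul]
  linarith
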